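/- Let X, Y : E → E be C² vector fields (ContDiff ℝ 2). Then for every x : E, div (VectorField.lieBracket ℝ X Y) (x) = fderiv ℝ (fun y => div Y y) x (X x) − fderiv ℝ (fun y => div X y) x (Y x). (The identity L_{[X,Y]}μ = (X(div Y) − Y(div X))μ underlying the fact that divergence-free fields form a Lie algebra.) -/

import Mathlib

open MeasureTheory

noncomputable section

variable {n : ℕ}

/-- The `i`-th standard basis vector of `EuclideanSpace ℝ (Fin n)`. -/
def e (i : Fin n) : EuclideanSpace ℝ (Fin n) := EuclideanSpace.single i 1

/-- The divergence of a vector field on `EuclideanSpace ℝ (Fin n)`. -/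
def div (X : EuclideanSpace ℝ (Fin n) → EuclideanSpace ℝ (Fin n))
    (x : EuclideanSpace ℝ (Fin n)) : ℝ :=
  ∑ i, fderiv ℝ X x (e i) i

lemma clm_eval (B : EuclideanSpace ℝ (Fin n) →L[ℝ] EuclideanSpace ℝ (Fin n))
    (v : EuclideanSpace ℝ (Fin n)) (i : Fin n) :
    B v i = ∑ j, v j * B (e j) i := by
  have hv : ∑ j, v j • e j = v := by
    simpa [e, EuclideanSpace.basisFun_apply, EuclideanSpace.basisFun_repr] using
      (EuclideanSpace.basisFun (Fin n) ℝ).sum_repr v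
  have hms := map_sum ((EuclideanSpace.proj (𝕜 := ℝ) i).comp B) (fun j => v j • e j) Finset.univ
  calc B v i = ((EuclideanSpace.proj (𝕜 := ℝ) i).comp B) v := rfl
    _ = ∑ j, ((EuclideanSpace.proj (𝕜 := ℝ) i).comp B) (v j • e j) := by
        conv_lhs => rw [← hv]
        exact hms
    _ = ∑ j, v j * B (e j) i := by simp [smul_eq_mul]

lemma fderiv_div_apply (Z : EuclideanSpace ℝ (Fin n) → EuclideanSpace ℝ (Fin n))
    (hZ : ContDiff ℝ 2 Z) (x v : EuclideanSpace ℝ (Fin n)) :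
    fderiv ℝ (fun y => div Z y) x v = ∑ i, fderiv ℝ (fderiv ℝ Z) x v (e i) i := by
  have hdZ : Differentiable ℝ (fderiv ℝ Z) :=
    (hZ.fderiv_right (m := 1) (by norm_num)).differentiable one_ne_zero
  set L : (i : Fin n) →
      (EuclideanSpace ℝ (Fin n) →L[ℝ] EuclideanSpace ℝ (Fin n)) →L[ℝ] ℝ :=
    fun i => (EuclideanSpace.proj (𝕜 := ℝ) i).comp
      (ContinuousLinearMap.apply ℝ (EuclideanSpace ℝ (Fin n)) (e i)) with hL
  have hterm : ∀ i : Fin n, HasFDerivAt (fun y => fderiv ℝ Z y (e i) i)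
      ((L i).comp (fderiv ℝ (fderiv ℝ Z) x)) x := fun i =>
    (L i).hasFDerivAt.comp x (hdZ x).hasFDerivAt
  have h1 : fderiv ℝ (fun y => div Z y) x
      = ∑ i, (L i).comp (fderiv ℝ (fderiv ℝ Z) x) := by
    have : HasFDerivAt (fun y => div Z y)
        (∑ i, (L i).comp (fderiv ℝ (fderiv ℝ Z) x)) x := by
      simpa [div] using HasFDerivAt.fun_sum (fun i _ => hterm i)
    exact this.fderiv
  rw [h1]
  simp [hL]

/-- `div [X, Y] = X (div Y) − Y (div X)` for `C²` vector fields. -/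
theorem div_lieBracket (X Y : EuclideanSpace ℝ (Fin n) → EuclideanSpace ℝ (Fin n))
    (hX : ContDiff ℝ 2 X) (hY : ContDiff ℝ 2 Y) (x : EuclideanSpace ℝ (Fin n)) :
    div (VectorField.lieBracket ℝ X Y) x
      = fderiv ℝ (fun y => div Y y) x (X x) - fderiv ℝ (fun y => div X y) x (Y x) := by
  have hXd : Differentiable ℝ X := hX.differentiable two_ne_zero
  have hYd : Differentiable ℝ Y := hY.differentiable two_ne_zero
  have hdX : Differentiable ℝ (fderiv ℝ X) :=
    (hX.fderiv_right (m := 1) (by norm_num)).differentiable one_ne_zero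
  have hdY : Differentiable ℝ (fderiv ℝ Y) :=
    (hY.fderiv_right (m := 1) (by norm_num)).differentiable one_ne_zero
  have h1 : DifferentiableAt ℝ (fun y => fderiv ℝ Y y (X y)) x :=
    (hdY x).clm_apply (hXd x)
  have h2 : DifferentiableAt ℝ (fun y => fderiv ℝ X y (Y y)) x :=
    (hdX x).clm_apply (hYd x)
  have hsX : IsSymmSndFDerivAt ℝ X x := hX.contDiffAt.isSymmSndFDerivAt (by norm_num)
  have hsY : IsSymmSndFDerivAt ℝ Y x := hY.contDiffAt.isSymmSndFDerivAt (by norm_num)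
  -- expand LHS
  have hbr : ∀ i : Fin n,
      fderiv ℝ (VectorField.lieBracket ℝ X Y) x (e i) i
        = (fderiv ℝ (fderiv ℝ Y) x (e i) (X x) i
            + fderiv ℝ Y x (fderiv ℝ X x (e i)) i)
          - (fderiv ℝ (fderiv ℝ X) x (e i) (Y x) i
            + fderiv ℝ X x (fderiv ℝ Y x (e i)) i) := by
    intro i
    have : fderiv ℝ (VectorField.lieBracket ℝ X Y) x
        = fderiv ℝ (fun y => fderiv ℝ Y y (X y)) x
          - fderiv ℝ (fun y => fderiv ℝ X y (Y y)) x := by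
      exact fderiv_sub h1 h2
    rw [this, fderiv_clm_apply (hdY x) (hXd x), fderiv_clm_apply (hdX x) (hYd x)]
    simp only [ContinuousLinearMap.sub_apply, ContinuousLinearMap.add_apply,
      ContinuousLinearMap.flip_apply, ContinuousLinearMap.comp_apply,
      PiLp.sub_apply, PiLp.add_apply]
    ring
  have trace_comm : ∑ i, fderiv ℝ Y x (fderiv ℝ X x (e i)) i
      = ∑ i, fderiv ℝ X x (fderiv ℝ Y x (e i)) i := by
    calc ∑ i, fderiv ℝ Y x (fderiv ℝ X x (e i)) i
        = ∑ i, ∑ j, (fderiv ℝ X x (e i)) j * fderiv ℝ Y x (e j) i :=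
          Finset.sum_congr rfl fun i _ => clm_eval _ _ i
      _ = ∑ j, ∑ i, (fderiv ℝ X x (e i)) j * fderiv ℝ Y x (e j) i := Finset.sum_comm
      _ = ∑ i, ∑ j, (fderiv ℝ Y x (e i)) j * fderiv ℝ X x (e j) i := by
          exact Finset.sum_congr rfl fun i _ => Finset.sum_congr rfl fun j _ => mul_comm _ _
      _ = ∑ i, fderiv ℝ X x (fderiv ℝ Y x (e i)) i :=
          Finset.sum_congr rfl fun i _ => (clm_eval _ _ i).symm
  rw [fderiv_div_apply Y hY x (X x), fderiv_div_apply X hX x (Y x)]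
  simp only [div, hbr]
  rw [Finset.sum_sub_distrib, Finset.sum_add_distrib, Finset.sum_add_distrib, trace_comm]
  have hsymY : ∀ i : Fin n, fderiv ℝ (fderiv ℝ Y) x (e i) (X x) i
      = fderiv ℝ (fderiv ℝ Y) x (X x) (e i) i := fun i => by rw [hsY (e i) (X x)]
  have hsymX : ∀ i : Fin n, fderiv ℝ (fderiv ℝ X) x (e i) (Y x) i
      = fderiv ℝ (fderiv ℝ X) x (Y x) (e i) i := fun i => by rw [hsX (e i) (Y x)]
  simp only [hsymY, hsymX]
  ring
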